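/- arXiv:2507.08783 — 2 statements merged into one kernel-verified Lean document; each statement's English description precedes it below -/
import Mathlib

section
/- Let W : ℝ → ℝ be continuous with W ≥ 0, let φ(s) := ∫₀ˢ √(2 W(τ)) dτ, and let ε > 0. If u : ℝᵈ → ℝ is differentiable, then ∫_{ℝᵈ} ‖∇(φ∘u)(x)‖ dx ≤ ∫_{ℝᵈ} ((ε/2)‖∇u(x)‖² + (1/ε)W(u(x))) dx, as an inequality of Lebesgue integrals with values in [0,∞]. -/
open MeasureTheory

lemma norm_gradient_eq {d : ℕ} (f : EuclideanSpace ℝ (Fin d) → ℝ) (x) :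
    ‖gradient f x‖ = ‖fderiv ℝ f x‖ := by
  rw [gradient, LinearIsometryEquiv.norm_map]

/-- The Modica–Mortola/Bogomol'nyi bound
`∫ ‖∇(φ∘u)‖ dx ≤ ∫ ((ε/2)‖∇u‖² + (1/ε)W(u)) dx` as an inequality of Lebesgue
integrals with values in `[0,∞]`. -/
theorem stmt2 {d : ℕ} (W : ℝ → ℝ) (hWc : Continuous W) (hW0 : ∀ s, 0 ≤ W s)
    (φ : ℝ → ℝ) (hφ : ∀ s, φ s = ∫ τ in (0:ℝ)..s, Real.sqrt (2 * W τ))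
    (ε : ℝ) (hε : 0 < ε)
    (u : EuclideanSpace ℝ (Fin d) → ℝ) (hu : Differentiable ℝ u) :
    ∫⁻ x, ENNReal.ofReal ‖gradient (φ ∘ u) x‖
      ≤ ∫⁻ x, ENNReal.ofReal ((ε / 2) * ‖gradient u x‖ ^ 2 + (1 / ε) * W (u x)) := by
  have hφfun : φ = fun s => ∫ τ in (0:ℝ)..s, Real.sqrt (2 * W τ) := funext hφ
  have hsq : Continuous fun τ => Real.sqrt (2 * W τ) :=
    (continuous_const.mul hWc).sqrt
  have hφ' : ∀ s : ℝ, HasDerivAt φ (Real.sqrt (2 * W s)) s := by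
    intro s
    rw [hφfun]
    exact intervalIntegral.integral_hasDerivAt_right (hsq.intervalIntegrable 0 s)
      hsq.aestronglyMeasurable.stronglyMeasurableAtFilter hsq.continuousAt
  refine lintegral_mono fun x => ENNReal.ofReal_le_ofReal ?_
  set b := Real.sqrt (2 * W (u x)) with hb
  have hb0 : 0 ≤ b := Real.sqrt_nonneg _
  have hb2 : b ^ 2 = 2 * W (u x) := Real.sq_sqrt (by have := hW0 (u x); linarith)
  have hcomp : fderiv ℝ (φ ∘ u) x = (fderiv ℝ φ (u x)).comp (fderiv ℝ u x) :=
    fderiv_comp x (hφ' (u x)).differentiableAt (hu x)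
  have hfd : ‖fderiv ℝ φ (u x)‖ = b := by
    rw [(hφ' (u x)).hasFDerivAt.fderiv, ContinuousLinearMap.norm_toSpanSingleton,
      Real.norm_eq_abs, abs_of_nonneg hb0]
  have hnorm : ‖gradient (φ ∘ u) x‖ ≤ b * ‖gradient u x‖ := by
    rw [norm_gradient_eq, norm_gradient_eq, hcomp]
    calc ‖(fderiv ℝ φ (u x)).comp (fderiv ℝ u x)‖
        ≤ ‖fderiv ℝ φ (u x)‖ * ‖fderiv ℝ u x‖ := ContinuousLinearMap.opNorm_comp_le _ _
      _ = b * ‖fderiv ℝ u x‖ := by rw [hfd]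
  refine hnorm.trans ?_
  set a := ‖gradient u x‖ with ha
  have ha0 : 0 ≤ a := norm_nonneg _
  rw [norm_gradient_eq] at ha
  have key : ε * (b * a) ≤ ε * (ε / 2 * a ^ 2 + 1 / ε * W (u x)) := by
    have h1 : ε * (1 / ε * W (u x)) = W (u x) := by field_simp
    nlinarith [sq_nonneg (ε * a - b)]
  exact le_of_mul_le_mul_left key hε
end

section
/- Let d ≥ 1 and S^{d−1} := {p ∈ ℝᵈ : ‖p‖ = 1}. Let μ be a finite Borel measure on ℝᵈ × S^{d−1} with first marginal ω, let σ be a finite Borel measure on ℝᵈ, and let n : ℝᵈ → ℝᵈ be Borel measurable with ‖n(x)‖ = 1 for σ-almost every x. Assume the compatibility condition: for every bounded Borel measurable ζ : ℝᵈ → ℝᵈ, ∫_{ℝᵈ×S^{d−1}} ⟨ζ(x), p⟩ dμ(x,p) = ∫_{ℝᵈ} ⟨ζ(x), n(x)⟩ dσ(x). Let ξ : ℝᵈ → ℝᵈ be Borel measurable with ‖ξ(x)‖ ≤ 1 for all x, and set ρ := dσ/dω. Then ∫_{ℝᵈ×S^{d−1}} (1 − ⟨p, ξ(x)⟩) dμ(x,p)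 = ∫_{ℝᵈ} (1 − ρ(x)) dω(x) + ∫_{ℝᵈ} (1 − ⟨n(x), ξ(x)⟩) dσ(x), and consequently ∫_{ℝᵈ} ‖n(x) − ξ(x)‖² dσ(x) ≤ 2 ∫_{ℝᵈ×S^{d−1}} (1 − ⟨p, ξ(x)⟩) dμ(x,p). -/
open MeasureTheory
open scoped RealInnerProductSpace

/-- Multiplicity decomposition of the relative entropy: under
the compatibility condition between the oriented varifold `μ` (with marginal
`ω = (Prod.fst)₊μ`), the finite measure `σ` and its unit normal `n`, and for any
Borel `ξ` with `‖ξ‖ ≤ 1`,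
`∫ (1 − ⟨p,ξ(x)⟩) dμ = ∫ (1 − ρ) dω + ∫ (1 − ⟨n,ξ⟩) dσ` where `ρ = dσ/dω`, and
consequently `∫ ‖n − ξ‖² dσ ≤ 2 ∫ (1 − ⟨p,ξ(x)⟩) dμ`. -/
theorem stmt11 {d : ℕ} (hd : 1 ≤ d)
    (μ : Measure (EuclideanSpace ℝ (Fin d) × EuclideanSpace ℝ (Fin d)))
    [IsFiniteMeasure μ] (hsphere : ∀ᵐ z ∂μ, ‖z.2‖ = 1)
    (σ : Measure (EuclideanSpace ℝ (Fin d))) [IsFiniteMeasure σ]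
    (n : EuclideanSpace ℝ (Fin d) → EuclideanSpace ℝ (Fin d))
    (hn : Measurable n) (hn1 : ∀ᵐ x ∂σ, ‖n x‖ = 1)
    (hcompat : ∀ ζ : EuclideanSpace ℝ (Fin d) → EuclideanSpace ℝ (Fin d),
      Measurable ζ → (∃ C, ∀ x, ‖ζ x‖ ≤ C) →
      ∫ z, ⟪ζ z.1, z.2⟫ ∂μ = ∫ x, ⟪ζ x, n x⟫ ∂σ)
    (ξ : EuclideanSpace ℝ (Fin d) → EuclideanSpace ℝ (Fin d))
    (hξm : Measurable ξ) (hξ1 : ∀ x, ‖ξ x‖ ≤ 1) :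
    (∫ z, (1 - ⟪z.2, ξ z.1⟫) ∂μ
        = (∫ x, (1 - (σ.rnDeriv (μ.map Prod.fst) x).toReal) ∂(μ.map Prod.fst))
          + ∫ x, (1 - ⟪n x, ξ x⟫) ∂σ) ∧
      ∫ x, ‖n x - ξ x‖ ^ 2 ∂σ ≤ 2 * ∫ z, (1 - ⟪z.2, ξ z.1⟫) ∂μ := by
  set ω := μ.map Prod.fst with hωdef
  haveI : IsFiniteMeasure ω := by
    rw [hωdef]; exact Measure.isFiniteMeasure_map μ Prod.fst
  -- Integrability facts
  have hI1 : Integrable (fun z => ⟪z.2, ξ z.1⟫) μ := by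
    refine Integrable.mono' (integrable_const (1 : ℝ))
      ((measurable_snd.inner (hξm.comp measurable_fst)).aestronglyMeasurable) ?_
    filter_upwards [hsphere] with z hz
    calc ‖⟪z.2, ξ z.1⟫‖ ≤ ‖z.2‖ * ‖ξ z.1‖ := norm_inner_le_norm _ _
      _ ≤ 1 := by rw [hz, one_mul]; exact hξ1 z.1
  have hI2 : Integrable (fun x => ⟪n x, ξ x⟫) σ := by
    refine Integrable.mono' (integrable_const (1 : ℝ))
      ((hn.inner hξm).aestronglyMeasurable) ?_
    filter_upwards [hn1] with x hx
    calc ‖⟪n x, ξ x⟫‖ ≤ ‖n x‖ * ‖ξ x‖ := norm_inner_le_norm _ _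
      _ ≤ 1 := by rw [hx, one_mul]; exact hξ1 x
  -- σ ≤ ω
  have hle : σ ≤ ω := by
    rw [Measure.le_iff]
    intro A hA
    set B : Set (EuclideanSpace ℝ (Fin d)) := {x | ‖n x‖ ≤ 1} with hBdef
    have hB : MeasurableSet B := measurableSet_le hn.norm measurable_const
    set ζ : EuclideanSpace ℝ (Fin d) → EuclideanSpace ℝ (Fin d) :=
      (A ∩ B).indicator n with hζdef
    have hζm : Measurable ζ := hn.indicator (hA.inter hB)
    have hζb : ∀ x, ‖ζ x‖ ≤ 1 := by
      intro x
      by_cases hx : x ∈ A ∩ B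
      · rw [hζdef, Set.indicator_of_mem hx]; exact hx.2
      · rw [hζdef, Set.indicator_of_notMem hx]; simp
    have hc := hcompat ζ hζm ⟨1, hζb⟩
    have hRHS : ∫ x, ⟪ζ x, n x⟫ ∂σ = (σ A).toReal := by
      rw [← Measure.real_def, ← integral_indicator_one hA]
      refine integral_congr_ae ?_
      filter_upwards [hn1] with x hx
      by_cases hxA : x ∈ A
      · have hxB : x ∈ B := by simp [hBdef, hx]
        rw [hζdef, Set.indicator_of_mem (Set.mem_inter hxA hxB), Set.indicator_of_mem hxA]
        have : ⟪n x, n x⟫ = ‖n x‖ ^ 2 := real_inner_self_eq_norm_sq (n x)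
        simp [this, hx]
      · rw [hζdef, Set.indicator_of_notMem (fun h => hxA h.1),
          Set.indicator_of_notMem hxA]
        simp
    have hLHS : ∫ z, ⟪ζ z.1, z.2⟫ ∂μ ≤ (ω A).toReal := by
      have h2 : ∫ z, A.indicator (fun _ => (1 : ℝ)) z.1 ∂μ = (ω A).toReal := by
        have hpre : (fun z : EuclideanSpace ℝ (Fin d) × EuclideanSpace ℝ (Fin d) =>
            A.indicator (fun _ => (1 : ℝ)) z.1)
            = (Prod.fst ⁻¹' A).indicator (fun _ => (1 : ℝ)) := by
          funext z; by_cases hz : z.1 ∈ A <;> simp [Set.indicator, hz]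
        rw [hpre, integral_indicator_const (1 : ℝ) (hA.preimage measurable_fst),
          smul_eq_mul, mul_one, hωdef, Measure.map_apply measurable_fst hA, Measure.real_def]
      rw [← h2]
      refine integral_mono_ae ?_ ?_ ?_
      · refine Integrable.mono' (integrable_const (1 : ℝ))
          (((hζm.comp measurable_fst).inner measurable_snd).aestronglyMeasurable) ?_
        filter_upwards [hsphere] with z hz
        calc ‖⟪ζ z.1, z.2⟫‖ ≤ ‖ζ z.1‖ * ‖z.2‖ := norm_inner_le_norm _ _
          _ ≤ 1 := by rw [hz, mul_one]; exact hζb z.1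
      · refine Integrable.mono' (integrable_const (1 : ℝ))
          ((stronglyMeasurable_const.indicator hA).aestronglyMeasurable.comp_measurable
            measurable_fst) ?_
        refine Filter.Eventually.of_forall fun z => ?_
        by_cases hz : z.1 ∈ A <;> simp [hz]
      · filter_upwards [hsphere] with z hz
        have hb : ⟪ζ z.1, z.2⟫ ≤ ‖ζ z.1‖ := by
          calc ⟪ζ z.1, z.2⟫ ≤ ‖ζ z.1‖ * ‖z.2‖ := real_inner_le_norm _ _
            _ = ‖ζ z.1‖ := by rw [hz, mul_one]
        by_cases hzA : z.1 ∈ A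
        · refine hb.trans ?_
          rw [Set.indicator_of_mem hzA]
          exact hζb z.1
        · rw [Set.indicator_of_notMem hzA, hζdef,
            Set.indicator_of_notMem (fun h => hzA h.1)]
          simp
    have hfin : (σ A).toReal ≤ (ω A).toReal := by
      rw [← hRHS, ← hc]; exact hLHS
    exact (ENNReal.toReal_le_toReal (measure_ne_top σ A) (measure_ne_top ω A)).mp hfin
  have hac : σ ≪ ω := Measure.absolutelyContinuous_of_le hle
  -- mass of ω
  have hωuniv : (ω Set.univ).toReal = (μ Set.univ).toReal := by
    rw [hωdef, Measure.map_apply measurable_fst MeasurableSet.univ, Set.preimage_univ]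
  -- integral of density
  have hρint : Integrable (fun x => (σ.rnDeriv ω x).toReal) ω :=
    Measure.integrable_toReal_rnDeriv
  have hρeq : ∫ x, (σ.rnDeriv ω x).toReal ∂ω = (σ Set.univ).toReal :=
    Measure.integral_toReal_rnDeriv hac
  -- compute the three integrals
  have hL : ∫ z, (1 - ⟪z.2, ξ z.1⟫) ∂μ
      = (μ Set.univ).toReal - ∫ x, ⟪n x, ξ x⟫ ∂σ := by
    rw [integral_sub (integrable_const 1) hI1, integral_const, smul_eq_mul, mul_one]
    congr 1
    have h1 : ∫ z, ⟪z.2, ξ z.1⟫ ∂μ = ∫ z, ⟪ξ z.1, z.2⟫ ∂μ := by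
      simp_rw [real_inner_comm]
    have h2 : ∫ x, ⟪ξ x, n x⟫ ∂σ = ∫ x, ⟪n x, ξ x⟫ ∂σ := by
      simp_rw [real_inner_comm]
    rw [h1, hcompat ξ hξm ⟨1, hξ1⟩, h2]
  have hM : ∫ x, (1 - (σ.rnDeriv ω x).toReal) ∂ω
      = (μ Set.univ).toReal - (σ Set.univ).toReal := by
    rw [integral_sub (integrable_const 1) hρint, integral_const, smul_eq_mul, mul_one,
      hρeq, Measure.real_def, hωuniv]
  have hR : ∫ x, (1 - ⟪n x, ξ x⟫) ∂σ
      = (σ Set.univ).toReal - ∫ x, ⟪n x, ξ x⟫ ∂σ := by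
    rw [integral_sub (integrable_const 1) hI2, integral_const, smul_eq_mul, mul_one, Measure.real_def]
  have hmain : ∫ z, (1 - ⟪z.2, ξ z.1⟫) ∂μ
      = (∫ x, (1 - (σ.rnDeriv ω x).toReal) ∂ω) + ∫ x, (1 - ⟪n x, ξ x⟫) ∂σ := by
    rw [hL, hM, hR]; ring
  refine ⟨hmain, ?_⟩
  -- nonnegativity of the multiplicity part
  have hρ1 : 0 ≤ ∫ x, (1 - (σ.rnDeriv ω x).toReal) ∂ω := by
    refine integral_nonneg_of_ae ?_
    filter_upwards [Measure.rnDeriv_le_one_of_le hle] with x hx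
    have : (σ.rnDeriv ω x).toReal ≤ 1 := by
      have := ENNReal.toReal_mono ENNReal.one_ne_top hx
      simpa using this
    simp only [Pi.zero_apply]
    linarith
  -- pointwise bound for the squared distance
  have hsq : ∫ x, ‖n x - ξ x‖ ^ 2 ∂σ ≤ ∫ x, (2 - 2 * ⟪n x, ξ x⟫) ∂σ := by
    refine integral_mono_ae ?_ ?_ ?_
    · refine Integrable.mono' (integrable_const (4 : ℝ))
        (((hn.sub hξm).norm.pow_const 2).aestronglyMeasurable) ?_
      filter_upwards [hn1] with x hx
      have h1 : ‖n x - ξ x‖ ≤ 2 := by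
        calc ‖n x - ξ x‖ ≤ ‖n x‖ + ‖ξ x‖ := norm_sub_le _ _
          _ ≤ 2 := by rw [hx]; linarith [hξ1 x]
      have h0 : (0 : ℝ) ≤ ‖n x - ξ x‖ := norm_nonneg _
      rw [Real.norm_eq_abs, abs_of_nonneg (by positivity)]
      nlinarith
    · exact (integrable_const 2).sub (hI2.const_mul 2)
    · filter_upwards [hn1] with x hx
      have hexp : ‖n x - ξ x‖ ^ 2 = ‖n x‖ ^ 2 - 2 * ⟪n x, ξ x⟫ + ‖ξ x‖ ^ 2 :=
        norm_sub_sq_real (n x) (ξ x)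
      have hξsq : ‖ξ x‖ ^ 2 ≤ 1 := by
        have := hξ1 x
        nlinarith [norm_nonneg (ξ x)]
      rw [hexp, hx]
      nlinarith
  have h2int : ∫ x, (2 - 2 * ⟪n x, ξ x⟫) ∂σ = 2 * ∫ x, (1 - ⟪n x, ξ x⟫) ∂σ := by
    rw [← integral_const_mul]
    congr 1
    funext x
    ring
  calc ∫ x, ‖n x - ξ x‖ ^ 2 ∂σ ≤ 2 * ∫ x, (1 - ⟪n x, ξ x⟫) ∂σ := by
        rw [← h2int]; exact hsq
    _ ≤ 2 * ∫ z, (1 - ⟪z.2, ξ z.1⟫) ∂μ := by rw [hmain]; linarith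
end
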